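/- Let m ≥ 1, k, l ∈ ℕ, let P : ℝ^m → ℝ_{0,m} be a left monogenic function, homogeneous of degree k, satisfying Σ_{j=1}^m e_j P(x) e_j = (−1)^l (2l − m) P(x) for all x, and let D : (0,∞) → ℝ be continuously differentiable. Then for all x ≠ 0, writing r = |x|, one has ∂_x(D(r) ι(x) P(x) ι(x)) = (−1)^{l+1}(2l − m) D(r) ι(x) P(x) − ((2k + m + 2)D(r) + r D′(r)) P(x) ι(x). -/

import Mathlib

noncomputable section

open scoped BigOperators

/-- The `ℓ¹`-norm with respect to a Hamel basis.  On a finite-dimensional real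
vector space (such as the Clifford algebra `ℝ_{0,m}`) the induced topology is
the canonical one. -/
def hamelNorm (V : Type) [AddCommGroup V] [Module ℝ V] : AddGroupNorm V where
  toFun v := ∑ i ∈ ((Module.Basis.ofVectorSpace ℝ V).repr v).support,
      |(Module.Basis.ofVectorSpace ℝ V).repr v i|
  map_zero' := by simp
  add_le' := by
    intro x y
    classical
    set b := Module.Basis.ofVectorSpace ℝ V
    have hrepr : b.repr (x + y) = b.repr x + b.repr y := map_add _ _ _
    calc ∑ i ∈ (b.repr (x + y)).support, |b.repr (x + y) i|
        ≤ ∑ i ∈ (b.repr x).support ∪ (b.repr y).support, |b.repr (x + y) i| := by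
          refine Finset.sum_le_sum_of_subset_of_nonneg ?_ (fun i _ _ => abs_nonneg _)
          rw [hrepr]; exact Finsupp.support_add
      _ ≤ ∑ i ∈ (b.repr x).support ∪ (b.repr y).support, (|b.repr x i| + |b.repr y i|) := by
          refine Finset.sum_le_sum fun i _ => ?_
          rw [hrepr, Finsupp.add_apply]; exact abs_add_le _ _
      _ = (∑ i ∈ (b.repr x).support ∪ (b.repr y).support, |b.repr x i|)
            + ∑ i ∈ (b.repr x).support ∪ (b.repr y).support, |b.repr y i| :=
          Finset.sum_add_distrib
      _ = (∑ i ∈ (b.repr x).support, |b.repr x i|)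
            + ∑ i ∈ (b.repr y).support, |b.repr y i| := by
          rw [← Finset.sum_subset Finset.subset_union_left
              (fun i _ hi => by simp [Finsupp.notMem_support_iff.mp hi]),
            ← Finset.sum_subset Finset.subset_union_right
              (fun i _ hi => by simp [Finsupp.notMem_support_iff.mp hi])]
  neg' := by
    intro x
    simp [map_neg]
  eq_zero_of_map_eq_zero' := by
    classical
    intro x hx
    set b := Module.Basis.ofVectorSpace ℝ V
    have h0 : b.repr x = 0 := by
      ext i
      by_cases hi : i ∈ (b.repr x).support
      · exact abs_eq_zero.mp
          ((Finset.sum_eq_zero_iff_of_nonneg (fun i _ => abs_nonneg _)).mp hx i hi)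
      · simpa using Finsupp.notMem_support_iff.mp hi
    exact b.repr.map_eq_zero_iff.mp h0

/-- The quadratic form `Q(v) = -‖v‖²` on `ℝ^m`. -/
def Qneg (m : ℕ) : QuadraticForm ℝ (EuclideanSpace ℝ (Fin m)) :=
  (QuadraticMap.weightedSumSquares ℝ fun _ : Fin m => (-1 : ℝ)).comp
    (WithLp.linearEquiv 2 ℝ (Fin m → ℝ)).toLinearMap

/-- The real Clifford algebra `ℝ_{0,m}`. -/
abbrev Cl (m : ℕ) := CliffordAlgebra (Qneg m)

/-- The canonical embedding `ι : ℝ^m → ℝ_{0,m}`. -/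
abbrev ιC (m : ℕ) : EuclideanSpace ℝ (Fin m) →ₗ[ℝ] Cl m := CliffordAlgebra.ι (Qneg m)

/-- The generators `e₁, …, e_m` of `ℝ_{0,m}`. -/
def eC (m : ℕ) (j : Fin m) : Cl m := ιC m (EuclideanSpace.single j 1)

noncomputable instance (m : ℕ) : NormedAddCommGroup (Cl m) :=
  (hamelNorm (Cl m)).toNormedAddCommGroup

noncomputable instance (m : ℕ) : NormedSpace ℝ (Cl m) where
  norm_smul_le a v := by
    classical
    have hv : ‖v‖ = ∑ i ∈ ((Module.Basis.ofVectorSpace ℝ (Cl m)).repr v).support,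
        |(Module.Basis.ofVectorSpace ℝ (Cl m)).repr v i| := rfl
    have hav : ‖a • v‖ = ∑ i ∈ ((Module.Basis.ofVectorSpace ℝ (Cl m)).repr (a • v)).support,
        |(Module.Basis.ofVectorSpace ℝ (Cl m)).repr (a • v) i| := rfl
    set b := Module.Basis.ofVectorSpace ℝ (Cl m)
    have hrepr : b.repr (a • v) = a • b.repr v := map_smul _ _ _
    rw [hav, hv, Real.norm_eq_abs]
    calc ∑ i ∈ (b.repr (a • v)).support, |b.repr (a • v) i|
        ≤ ∑ i ∈ (b.repr v).support, |b.repr (a • v) i| := by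
          refine Finset.sum_le_sum_of_subset_of_nonneg ?_ (fun i _ _ => abs_nonneg _)
          rw [hrepr]; exact Finsupp.support_smul
      _ = ∑ i ∈ (b.repr v).support, |a| * |b.repr v i| := by
          refine Finset.sum_congr rfl fun i _ => ?_
          rw [hrepr, Finsupp.smul_apply, smul_eq_mul, abs_mul]
      _ = |a| * ∑ i ∈ (b.repr v).support, |b.repr v i| := by rw [Finset.mul_sum]

/-- The Dirac operator acting from the left: `∂_x f = Σⱼ eⱼ (∂_{xⱼ} f)`. -/
def diracL (m : ℕ) (f : EuclideanSpace ℝ (Fin m) → Cl m) (x : EuclideanSpace ℝ (Fin m)) : Cl m :=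
  ∑ j, eC m j * fderiv ℝ f x (EuclideanSpace.single j 1)

/-- The Dirac operator acting from the right: `f ∂_x = Σⱼ (∂_{xⱼ} f) eⱼ`. -/
def diracR (m : ℕ) (f : EuclideanSpace ℝ (Fin m) → Cl m) (x : EuclideanSpace ℝ (Fin m)) : Cl m :=
  ∑ j, fderiv ℝ f x (EuclideanSpace.single j 1) * eC m j

section Aux
open CliffordAlgebra

variable {m : ℕ}

lemma Qneg_apply (v : EuclideanSpace ℝ (Fin m)) : Qneg m v = -∑ i, v i * v i := by
  simp [Qneg, QuadraticMap.weightedSumSquares_apply, Finset.sum_neg_distrib]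

lemma Qneg_single (j : Fin m) : Qneg m (EuclideanSpace.single j 1) = -1 := by
  rw [Qneg_apply]
  simp [EuclideanSpace.single_apply]

lemma Qneg_polar (a b : EuclideanSpace ℝ (Fin m)) :
    QuadraticMap.polar (Qneg m) a b = -2 * ∑ i, a i * b i := by
  simp only [QuadraticMap.polar, Qneg_apply]
  have h1 : ∀ i, (a + b) i = a i + b i := fun i => rfl
  simp only [h1]
  have key : -(∑ x, (a x + b x) * (a x + b x)) - -(∑ x, a x * a x) - -(∑ x, b x * b x)
      = ∑ x, (-((a x + b x) * (a x + b x)) + a x * a x + b x * b x) := by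
    rw [Finset.sum_add_distrib, Finset.sum_add_distrib, ← Finset.sum_neg_distrib]
    ring
  rw [key, Finset.mul_sum]
  exact Finset.sum_congr rfl fun i _ => by ring

lemma eC_mul_eC_self (j : Fin m) : eC m j * eC m j = -1 := by
  rw [eC, ιC, ι_sq_scalar, Qneg_single]
  simp [Algebra.algebraMap_eq_smul_one]

lemma eC_mul_ι_add (j : Fin m) (v : EuclideanSpace ℝ (Fin m)) :
    eC m j * ιC m v + ιC m v * eC m j = (-2 * v j) • 1 := by
  rw [eC, ιC, ι_mul_ι_add_swap, Qneg_polar, Algebra.algebraMap_eq_smul_one]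
  congr 1
  simp [EuclideanSpace.single_apply]

end Aux

section FinDim
open CliffordAlgebra

variable {m : ℕ}

lemma eC_anticomm {i j : Fin m} (h : i ≠ j) : eC m i * eC m j = -(eC m j * eC m i) := by
  have h2 := eC_mul_ι_add (m := m) i (EuclideanSpace.single j 1)
  have h3 : (EuclideanSpace.single j (1:ℝ)) i = 0 := by
    simp [EuclideanSpace.single_apply, h]
  rw [h3] at h2
  simp only [mul_zero, neg_zero, zero_smul] at h2
  exact eq_neg_of_add_eq_zero_left h2

/-- monomial -/
def monL (m : ℕ) (l : List (Fin m)) : Cl m := (l.map (eC m)).prod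

lemma step (j : Fin m) : ∀ l : List (Fin m), l.Pairwise (· < ·) →
    ∃ l' : List (Fin m), l'.Pairwise (· < ·) ∧
      (∀ a : Fin m, a < j → (∀ x ∈ l, a < x) → ∀ x ∈ l', a < x) ∧
      (eC m j * monL m l = monL m l' ∨ eC m j * monL m l = -monL m l')
  | [], _ => ⟨[j], List.pairwise_singleton _ j, fun a ha _ x hx => by
      rw [List.mem_singleton] at hx; exact hx ▸ ha, Or.inl (by simp [monL])⟩
  | i :: t, hsort => by
      have hts : t.Pairwise (· < ·) := (List.pairwise_cons.mp hsort).2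
      have hit : ∀ x ∈ t, i < x := (List.pairwise_cons.mp hsort).1
      rcases lt_trichotomy j i with hji | rfl | hij
      · refine ⟨j :: i :: t, List.pairwise_cons.mpr ⟨?_, hsort⟩, ?_, Or.inl (by
          simp [monL, List.prod_cons])⟩
        · intro x hx
          rcases List.mem_cons.mp hx with rfl | hx
          · exact hji
          · exact hji.trans (hit x hx)
        · intro a ha hl x hx
          rcases List.mem_cons.mp hx with rfl | hx
          · exact ha
          · exact hl x hx
      · refine ⟨t, hts, ?_, Or.inr ?_⟩
        · intro a ha hl x hx; exact hl x (List.mem_cons_of_mem _ hx)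
        · show eC m j * monL m (j :: t) = -monL m t
          rw [monL, List.map_cons, List.prod_cons, ← mul_assoc, eC_mul_eC_self]
          simp [monL]
      · obtain ⟨t', ht's, ht'b, ht'e⟩ := step j t hts
        have hit' : ∀ x ∈ t', i < x := ht'b i hij hit
        refine ⟨i :: t', List.pairwise_cons.mpr ⟨hit', ht's⟩, ?_, ?_⟩
        · intro a ha hl x hx
          rcases List.mem_cons.mp hx with rfl | hx
          · exact hl x (List.mem_cons_self)
          · exact ht'b a ha (fun y hy => hl y (List.mem_cons_of_mem _ hy)) x hx
        · have hswap : eC m j * eC m i = -(eC m i * eC m j) := eC_anticomm (ne_of_gt hij)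
          have hexp : eC m j * monL m (i :: t) = -(eC m i * (eC m j * monL m t)) := by
            rw [monL, List.map_cons, List.prod_cons, ← mul_assoc, hswap, neg_mul, mul_assoc]
            rfl
          rcases ht'e with h | h
          · right
            rw [hexp, h]
            simp [monL]
          · left
            rw [hexp, h]
            simp [monL]

def clGen (m : ℕ) : Set (Cl m) := Set.range fun S : Finset (Fin m) => monL m (S.sort (· ≤ ·))

lemma mon_mem_span {l : List (Fin m)} (hl : l.Pairwise (· < ·)) :
    monL m l ∈ Submodule.span ℝ (clGen m) := by
  have hnd : l.Nodup := hl.nodup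
  have hsle : l.Pairwise (· ≤ ·) := hl.imp le_of_lt
  have h : (l.toFinset.sort (· ≤ ·)) = l := (List.toFinset_sort _ hnd).mpr hsle
  exact Submodule.subset_span ⟨l.toFinset, by show monL m _ = monL m l; rw [h]⟩

lemma eC_mul_mem {j : Fin m} {z : Cl m} (hz : z ∈ Submodule.span ℝ (clGen m)) :
    eC m j * z ∈ Submodule.span ℝ (clGen m) := by
  induction hz using Submodule.span_induction with
  | mem x hx =>
      obtain ⟨S, rfl⟩ := hx
      obtain ⟨l', hl's, -, hl'e⟩ := step j (S.sort (· ≤ ·)) (Finset.sortedLT_sort S).pairwise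
      rcases hl'e with h | h
      · rw [h]; exact mon_mem_span hl's
      · rw [h]; exact neg_mem (mon_mem_span hl's)
  | zero => simp
  | add x y _ _ hx hy => rw [mul_add]; exact add_mem hx hy
  | smul a x _ hx => rw [mul_smul_comm]; exact Submodule.smul_mem _ _ hx

lemma monL_mem_span : ∀ l : List (Fin m), monL m l ∈ Submodule.span ℝ (clGen m)
  | [] => mon_mem_span List.Pairwise.nil
  | j :: t => by
      have : monL m (j :: t) = eC m j * monL m t := by
        rw [monL, List.map_cons, List.prod_cons]; rfl
      rw [this]
      exact eC_mul_mem (monL_mem_span t)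

lemma euclid_decomp (v : EuclideanSpace ℝ (Fin m)) :
    v = ∑ j, v j • EuclideanSpace.single j 1 := by
  ext i
  rw [WithLp.ofLp_sum, Finset.sum_apply]
  simp [EuclideanSpace.single_apply]

lemma ιC_eq_sum (v : EuclideanSpace ℝ (Fin m)) : ιC m v = ∑ j, v j • eC m j := by
  conv_lhs => rw [euclid_decomp v]
  rw [map_sum]
  exact Finset.sum_congr rfl fun j _ => by rw [map_smul]; rfl

lemma clGen_span_top : Submodule.span ℝ (clGen m) = ⊤ := by
  rw [eq_top_iff]
  rintro x -
  induction x using CliffordAlgebra.induction with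
  | algebraMap r =>
      rw [Algebra.algebraMap_eq_smul_one]
      exact Submodule.smul_mem _ _ (monL_mem_span [])
  | ι v =>
      rw [show CliffordAlgebra.ι (Qneg m) v = ιC m v from rfl, ιC_eq_sum]
      exact Submodule.sum_mem _ fun j _ => Submodule.smul_mem _ _ (by simpa [monL] using monL_mem_span [j])
  | mul a b ha hb =>
      induction ha using Submodule.span_induction with
      | mem x hx =>
          induction hb using Submodule.span_induction with
          | mem y hy =>
              obtain ⟨S, rfl⟩ := hx
              obtain ⟨T, rfl⟩ := hy
              have : monL m (S.sort (· ≤ ·)) * monL m (T.sort (· ≤ ·))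
                  = monL m (S.sort (· ≤ ·) ++ T.sort (· ≤ ·)) := by
                rw [monL, monL, monL, List.map_append, List.prod_append]
              rw [this]
              exact monL_mem_span _
          | zero => simp
          | add y z _ _ hy hz => rw [mul_add]; exact add_mem hy hz
          | smul a y _ hy => rw [mul_smul_comm]; exact Submodule.smul_mem _ _ hy
      | zero => simp
      | add x y _ _ hx hy => rw [add_mul]; exact add_mem hx hy
      | smul a x _ hx => rw [smul_mul_assoc]; exact Submodule.smul_mem _ _ hx
  | add a b ha hb => exact add_mem ha hb

instance Cl.instFiniteDimensional : FiniteDimensional ℝ (Cl m) :=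
  ⟨Submodule.fg_def.mpr ⟨clGen m, Set.finite_range _, clGen_span_top⟩⟩

end FinDim

section Analysis
open CliffordAlgebra

variable {m : ℕ}

noncomputable def mulCL (m : ℕ) : Cl m →L[ℝ] Cl m →L[ℝ] Cl m :=
  LinearMap.toContinuousLinearMap
    ((LinearMap.toContinuousLinearMap :
        (Cl m →ₗ[ℝ] Cl m) ≃ₗ[ℝ] (Cl m →L[ℝ] Cl m)).toLinearMap.comp (LinearMap.mul ℝ (Cl m)))

@[simp] lemma mulCL_apply (a b : Cl m) : mulCL m a b = a * b := by
  simp [mulCL]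

noncomputable def ιCL (m : ℕ) : EuclideanSpace ℝ (Fin m) →L[ℝ] Cl m :=
  LinearMap.toContinuousLinearMap (ιC m)

@[simp] lemma ιCL_apply (v : EuclideanSpace ℝ (Fin m)) : ιCL m v = ιC m v := rfl

lemma hasFDerivAt_norm_euclid (x : EuclideanSpace ℝ (Fin m)) (hx : x ≠ 0) :
    HasFDerivAt (fun y : EuclideanSpace ℝ (Fin m) => ‖y‖) ((‖x‖⁻¹ : ℝ) • innerSL ℝ x) x := by
  have hr : (0:ℝ) < ‖x‖ := norm_pos_iff.mpr hx
  have h1 : HasFDerivAt (fun y : EuclideanSpace ℝ (Fin m) => (inner ℝ y y : ℝ))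
      ((fderivInnerCLM ℝ (x, x)).comp
        ((ContinuousLinearMap.id ℝ _).prod (ContinuousLinearMap.id ℝ _))) x :=
    (hasFDerivAt_id x).inner (𝕜 := ℝ) (hasFDerivAt_id x)
  have hxx : (inner ℝ x x : ℝ) = ‖x‖ * ‖x‖ := real_inner_self_eq_norm_mul_norm x
  have h2 : HasDerivAt Real.sqrt (1 / (2 * Real.sqrt (inner ℝ x x : ℝ))) (inner ℝ x x : ℝ) :=
    Real.hasDerivAt_sqrt (by rw [hxx]; positivity)
  have h3 := HasDerivAt.comp_hasFDerivAt_of_eq x h2 h1 rfl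
  have hfun : (Real.sqrt ∘ fun y : EuclideanSpace ℝ (Fin m) => (inner ℝ y y : ℝ))
      = fun y : EuclideanSpace ℝ (Fin m) => ‖y‖ := by
    funext y
    have hyy : (inner ℝ y y : ℝ) = ‖y‖ * ‖y‖ := real_inner_self_eq_norm_mul_norm y
    simp only [Function.comp_apply, Function.comp, hyy]
    exact Real.sqrt_mul_self (norm_nonneg y)
  rw [hfun] at h3
  refine h3.congr_fderiv (Eq.symm ?_)
  ext v
  simp only [ContinuousLinearMap.coe_smul', Pi.smul_apply, innerSL_apply_apply, smul_eq_mul,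
    ContinuousLinearMap.coe_comp', Function.comp_apply, ContinuousLinearMap.prod_apply,
    ContinuousLinearMap.coe_id', id_eq, fderivInnerCLM_apply, hxx,
    Real.sqrt_mul_self hr.le]
  rw [real_inner_comm v x]
  field_simp
  ring

lemma euler {k : ℕ} {P : EuclideanSpace ℝ (Fin m) → Cl m} (hP : ContDiff ℝ 1 P)
    (hPhom : ∀ (t : ℝ) (x : EuclideanSpace ℝ (Fin m)), P (t • x) = t ^ k • P x)
    (x : EuclideanSpace ℝ (Fin m)) :
    fderiv ℝ P x x = (k : ℝ) • P x := by
  have hd : DifferentiableAt ℝ P x := (hP.differentiable one_ne_zero) x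
  have h0 : HasDerivAt (fun t : ℝ => t • x) x 1 := by
    simpa using (hasDerivAt_id (1:ℝ)).smul_const x
  have hfd : HasFDerivAt P (fderiv ℝ P x) ((1:ℝ) • x) := by
    rw [one_smul]; exact hd.hasFDerivAt
  have h1 : HasDerivAt (fun t : ℝ => P (t • x)) (fderiv ℝ P x x) 1 := by
    exact hfd.comp_hasDerivAt (1:ℝ) h0
  have h2 : HasDerivAt (fun t : ℝ => t ^ k • P x) ((k : ℝ) • P x) 1 := by
    simpa using (hasDerivAt_pow k (1:ℝ)).smul_const (P x)
  have h1' : HasDerivAt (fun t : ℝ => P (t • x)) ((k : ℝ) • P x) 1 := by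
    have hfe : (fun t : ℝ => P (t • x)) = fun t : ℝ => t ^ k • P x :=
      funext fun t => hPhom t x
    rw [hfe]; exact h2
  exact h1.unique h1'

lemma inner_single (x : EuclideanSpace ℝ (Fin m)) (j : Fin m) :
    (inner ℝ x (EuclideanSpace.single j 1) : ℝ) = x j := by
  rw [PiLp.inner_apply]
  simp [EuclideanSpace.single_apply]

lemma ι_sq (x : EuclideanSpace ℝ (Fin m)) :
    ιC m x * ιC m x = (-(‖x‖ * ‖x‖) : ℝ) • 1 := by
  rw [ιC, CliffordAlgebra.ι_sq_scalar, Algebra.algebraMap_eq_smul_one, Qneg_apply]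
  congr 1
  have h := real_inner_self_eq_norm_mul_norm x
  rw [PiLp.inner_apply] at h
  simp only [RCLike.inner_apply, conj_trivial] at h
  rw [h]

end Analysis


/-- `∂_x(D(r) ι(x) P(x) ι(x)) = (-1)^{l+1}(2l - m) D(r) ι(x) P(x)
- ((2k + m + 2)D(r) + r D′(r)) P(x) ι(x)`. -/
theorem dirac_D_smul_xPx (m k l : ℕ) (hm : 1 ≤ m) (P : EuclideanSpace ℝ (Fin m) → Cl m)
    (hP : ContDiff ℝ 1 P) (hPmono : ∀ x, diracL m P x = 0)
    (hPhom : ∀ (t : ℝ) (x : EuclideanSpace ℝ (Fin m)), P (t • x) = t ^ k • P x)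
    (hPl : ∀ x, ∑ j, eC m j * P x * eC m j
      = ((-1 : ℝ) ^ l * (2 * (l : ℝ) - (m : ℝ))) • P x)
    (D : ℝ → ℝ) (hD : ContDiffOn ℝ 1 D (Set.Ioi 0))
    (x : EuclideanSpace ℝ (Fin m)) (hx : x ≠ 0) :
    diracL m (fun y => D ‖y‖ • (ιC m y * P y * ιC m y)) x
      = ((-1 : ℝ) ^ (l + 1) * (2 * (l : ℝ) - (m : ℝ)) * D ‖x‖) • (ιC m x * P x)
        + (-((2 * (k : ℝ) + (m : ℝ) + 2) * D ‖x‖ + ‖x‖ * deriv D ‖x‖)) • (P x * ιC m x) := by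
  classical
  have hr : (0:ℝ) < ‖x‖ := norm_pos_iff.mpr hx
  have hPd : ∀ y, HasFDerivAt P (fderiv ℝ P y) y :=
    fun y => ((hP.differentiable one_ne_zero) y).hasFDerivAt
  have hDd : HasDerivAt D (deriv D ‖x‖) ‖x‖ :=
    ((hD.differentiableOn one_ne_zero).differentiableAt (isOpen_Ioi.mem_nhds hr)).hasDerivAt
  have hDn : HasFDerivAt (fun y : EuclideanSpace ℝ (Fin m) => D ‖y‖)
      (deriv D ‖x‖ • ((‖x‖⁻¹ : ℝ) • innerSL ℝ x)) x := by
    exact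
      hDd.comp_hasFDerivAt x (hasFDerivAt_norm_euclid x hx)
  have hι : ∀ y, HasFDerivAt (fun z : EuclideanSpace ℝ (Fin m) => ιC m z) (ιCL m) y :=
    fun y => (ιCL m).hasFDerivAt
  have hg1 : HasFDerivAt (fun y => ιC m y * P y)
      ((mulCL m).precompR (EuclideanSpace ℝ (Fin m)) (ιC m x) (fderiv ℝ P x)
        + (mulCL m).precompL (EuclideanSpace ℝ (Fin m)) (ιCL m) (P x)) x :=
    (mulCL m).hasFDerivAt_of_bilinear (hι x) (hPd x)
  have hg2 : HasFDerivAt (fun y => ιC m y * P y * ιC m y)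
      ((mulCL m).precompR (EuclideanSpace ℝ (Fin m)) (ιC m x * P x) (ιCL m)
        + (mulCL m).precompL (EuclideanSpace ℝ (Fin m))
          ((mulCL m).precompR (EuclideanSpace ℝ (Fin m)) (ιC m x) (fderiv ℝ P x)
            + (mulCL m).precompL (EuclideanSpace ℝ (Fin m)) (ιCL m) (P x)) (ιC m x)) x :=
    (mulCL m).hasFDerivAt_of_bilinear hg1 (hι x)
  have hf : HasFDerivAt (fun y => D ‖y‖ • (ιC m y * P y * ιC m y))
      (D ‖x‖ • ((mulCL m).precompR (EuclideanSpace ℝ (Fin m)) (ιC m x * P x) (ιCL m)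
        + (mulCL m).precompL (EuclideanSpace ℝ (Fin m))
          ((mulCL m).precompR (EuclideanSpace ℝ (Fin m)) (ιC m x) (fderiv ℝ P x)
            + (mulCL m).precompL (EuclideanSpace ℝ (Fin m)) (ιCL m) (P x)) (ιC m x))
       + (deriv D ‖x‖ • ((‖x‖⁻¹ : ℝ) • innerSL ℝ x)).smulRight (ιC m x * P x * ιC m x)) x :=
    hDn.smul hg2
  have hfd := hf.fderiv
  have heC : ∀ j : Fin m, ιC m (EuclideanSpace.single j (1:ℝ)) = eC m j := fun j => rfl
  rw [show diracL m (fun y => D ‖y‖ • (ιC m y * P y * ιC m y)) x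
      = ∑ j, eC m j * fderiv ℝ (fun y => D ‖y‖ • (ιC m y * P y * ιC m y)) x
          (EuclideanSpace.single j 1) from rfl, hfd]
  simp only [ContinuousLinearMap.add_apply, ContinuousLinearMap.coe_smul', Pi.smul_apply,
    ContinuousLinearMap.smulRight_apply, ContinuousLinearMap.precompR_apply,
    ContinuousLinearMap.precompL_apply, ContinuousLinearMap.compL_apply,
    ContinuousLinearMap.coe_comp', Function.comp_apply, mulCL_apply, ιCL_apply, innerSL_apply_apply,
    smul_eq_mul, inner_single, heC]
  have hrel' : ∀ (j : Fin m) (z : Cl m),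
      eC m j * (ιC m x * z) = (-2 * x j) • z - ιC m x * (eC m j * z) := by
    intro j z
    have h2 : eC m j * ιC m x = (-2 * x j) • 1 - ιC m x * eC m j :=
      eq_sub_of_add_eq (eC_mul_ι_add j x)
    calc eC m j * (ιC m x * z) = (eC m j * ιC m x) * z := (mul_assoc _ _ _).symm
      _ = ((-2 * x j) • 1 - ιC m x * eC m j) * z := by rw [h2]
      _ = (-2 * x j) • z - ιC m x * (eC m j * z) := by
          rw [sub_mul, smul_mul_assoc, one_mul, mul_assoc]
  have hee' : ∀ (j : Fin m) (z : Cl m), eC m j * (eC m j * z) = -z := by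
    intro j z
    rw [← mul_assoc, eC_mul_eC_self, neg_one_mul]
  simp only [mul_add, mul_sub, add_mul, sub_mul, mul_smul_comm, smul_mul_assoc, smul_smul,
    smul_add, smul_sub, mul_assoc, hrel', hee', mul_neg, neg_mul, smul_neg, mul_one, one_mul]
  -- basic sum identities
  have E1 : ∑ j, x j • eC m j = ιC m x := (ιC_eq_sum x).symm
  have E2 : ∑ j, x j • (fderiv ℝ P x (EuclideanSpace.single j 1)) = (k:ℝ) • P x := by
    calc ∑ j, x j • fderiv ℝ P x (EuclideanSpace.single j 1)
        = fderiv ℝ P x (∑ j, x j • EuclideanSpace.single j 1) := by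
          rw [map_sum]
          exact Finset.sum_congr rfl fun j _ => ((fderiv ℝ P x).map_smul _ _).symm
      _ = fderiv ℝ P x x := by rw [← euclid_decomp x]
      _ = (k:ℝ) • P x := euler hP hPhom x
  have E3 : ∑ j, x j * x j = ‖x‖ * ‖x‖ := by
    have h := real_inner_self_eq_norm_mul_norm x
    rw [PiLp.inner_apply] at h
    simpa only [RCLike.inner_apply, conj_trivial] using h
  have E4 : ∑ j, eC m j * fderiv ℝ P x (EuclideanSpace.single j 1) = 0 := hPmono x
  have E5 : ∑ j, eC m j * (P x * eC m j) = ((-1:ℝ)^l * (2*(l:ℝ) - (m:ℝ))) • P x := by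
    rw [← hPl x]
    exact Finset.sum_congr rfl fun j _ => (mul_assoc _ _ _).symm
  have hsq : ιC m x * ιC m x = (-(‖x‖ * ‖x‖) : ℝ) • 1 := ι_sq x
  -- the seven sums
  have S3 : ∑ j, -(D ‖x‖ * (2 * x j)) • (P x * eC m j)
      = (-(2 * D ‖x‖)) • (P x * ιC m x) := by
    calc ∑ j, -(D ‖x‖ * (2 * x j)) • (P x * eC m j)
        = ∑ j, (-(2 * D ‖x‖)) • (x j • (P x * eC m j)) := by
          refine Finset.sum_congr rfl fun j _ => ?_
          rw [smul_smul]; congr 1; ring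
      _ = (-(2 * D ‖x‖)) • (P x * ∑ j, x j • eC m j) := by
          rw [← Finset.smul_sum]; congr 1
          rw [Finset.mul_sum]
          exact Finset.sum_congr rfl fun j _ => (mul_smul_comm _ _ _).symm
      _ = _ := by rw [E1]
  have S4 : ∑ j, D ‖x‖ • (ιC m x * (eC m j * (P x * eC m j)))
      = D ‖x‖ • (ιC m x * (((-1:ℝ)^l * (2*(l:ℝ) - (m:ℝ))) • P x)) := by
    rw [← Finset.smul_sum, ← Finset.mul_sum, E5]
  have S5 : ∑ j, -(D ‖x‖ * (2 * x j)) • (fderiv ℝ P x (EuclideanSpace.single j 1) * ιC m x)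
      = ((-(2 * D ‖x‖)) * (k:ℝ)) • (P x * ιC m x) := by
    calc ∑ j, -(D ‖x‖ * (2 * x j)) • (fderiv ℝ P x (EuclideanSpace.single j 1) * ιC m x)
        = ∑ j, (-(2 * D ‖x‖)) • ((x j • fderiv ℝ P x (EuclideanSpace.single j 1)) * ιC m x) := by
          refine Finset.sum_congr rfl fun j _ => ?_
          rw [smul_mul_assoc, smul_smul]; congr 1; ring
      _ = (-(2 * D ‖x‖)) • ((∑ j, x j • fderiv ℝ P x (EuclideanSpace.single j 1)) * ιC m x) := by
          rw [← Finset.smul_sum, Finset.sum_mul]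
      _ = _ := by rw [E2, smul_mul_assoc, smul_smul]
  have S6 : ∑ j, D ‖x‖ • (ιC m x * (eC m j * (fderiv ℝ P x (EuclideanSpace.single j 1) * ιC m x)))
      = 0 := by
    have h : ∑ j, eC m j * (fderiv ℝ P x (EuclideanSpace.single j 1) * ιC m x)
        = (∑ j, eC m j * fderiv ℝ P x (EuclideanSpace.single j 1)) * ιC m x := by
      rw [Finset.sum_mul]
      exact Finset.sum_congr rfl fun j _ => (mul_assoc _ _ _).symm
    rw [← Finset.smul_sum, ← Finset.mul_sum, h, E4, zero_mul, mul_zero, smul_zero]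
  have S7 : ∑ _j : Fin m, -(D ‖x‖ • (P x * ιC m x))
      = ((m:ℝ)) • (-(D ‖x‖ • (P x * ιC m x))) := by
    rw [Finset.sum_const, Finset.card_univ, Fintype.card_fin, Nat.cast_smul_eq_nsmul]
  have S1 : ∑ j, -(deriv D ‖x‖ * (‖x‖⁻¹ * (x j * (2 * x j)))) • (P x * ιC m x)
      = (-(deriv D ‖x‖ * ‖x‖⁻¹ * 2 * (‖x‖ * ‖x‖))) • (P x * ιC m x) := by
    rw [← Finset.sum_smul]; congr 1
    calc ∑ j, -(deriv D ‖x‖ * (‖x‖⁻¹ * (x j * (2 * x j))))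
        = ∑ j, (-(deriv D ‖x‖ * ‖x‖⁻¹ * 2)) * (x j * x j) := by
          exact Finset.sum_congr rfl fun j _ => by ring
      _ = (-(deriv D ‖x‖ * ‖x‖⁻¹ * 2)) * (‖x‖ * ‖x‖) := by rw [← Finset.mul_sum, E3]
      _ = _ := by ring
  have S2 : ∑ j, (deriv D ‖x‖ * (‖x‖⁻¹ * x j)) • (ιC m x * (eC m j * (P x * ιC m x)))
      = (deriv D ‖x‖ * ‖x‖⁻¹) • ((-(‖x‖ * ‖x‖) : ℝ) • (P x * ιC m x)) := by
    calc ∑ j, (deriv D ‖x‖ * (‖x‖⁻¹ * x j)) • (ιC m x * (eC m j * (P x * ιC m x)))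
        = ∑ j, (deriv D ‖x‖ * ‖x‖⁻¹) • (ιC m x * ((x j • eC m j) * (P x * ιC m x))) := by
          refine Finset.sum_congr rfl fun j _ => ?_
          rw [smul_mul_assoc, mul_smul_comm, smul_smul]; congr 1; ring
      _ = (deriv D ‖x‖ * ‖x‖⁻¹) • (ιC m x * ((∑ j, x j • eC m j) * (P x * ιC m x))) := by
          rw [← Finset.smul_sum, ← Finset.mul_sum, Finset.sum_mul]
      _ = (deriv D ‖x‖ * ‖x‖⁻¹) • ((ιC m x * ιC m x) * (P x * ιC m x)) := by
          rw [E1, ← mul_assoc]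
      _ = _ := by rw [hsq, smul_mul_assoc, one_mul]
  simp only [Finset.sum_add_distrib, Finset.sum_sub_distrib, Finset.sum_neg_distrib]
  rw [S1, S2, S3, S4, S5, S6]
  rw [Finset.sum_const, Finset.card_univ, Fintype.card_fin, ← Nat.cast_smul_eq_nsmul ℝ,
    mul_smul_comm]
  have hne : ‖x‖ ≠ 0 := hr.ne'
  match_scalars <;> field_simp <;> ring

end
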